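/- Let R be a commutative ring, f₁,...,f_s ∈ R, and p a prime ideal of R. Then p contains the ideal generated by the products {∏_{j∉J} f_j : J ⊆ {1,...,s}, |J| = q} if and only if there exists a subset K ⊆ {1,...,s} with |K| = q+1 such that f_i ∈ p for all i ∈ K. -/
import Mathlib


/-- A prime ideal `p` contains the ideal generated by the products `∏_{j ∉ J} f_j`
(over all `J ⊆ {1,…,s}` with `|J| = q`) if and only if there is a subset `K` with
`|K| = q + 1` such that `f_i ∈ p` for all `i ∈ K`. -/
theorem span_prod_compl_le_prime_iff (R : Type*) [CommRing R] (s q : ℕ)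
    (hq : 1 ≤ q) (hs : q < s) (f : Fin s → R) (p : Ideal R) [p.IsPrime] :
    Ideal.span ((fun J : Finset (Fin s) => ∏ j ∈ Jᶜ, f j) '' {J | J.card = q}) ≤ p ↔
      ∃ K : Finset (Fin s), K.card = q + 1 ∧ ∀ i ∈ K, f i ∈ p := by
  classical
  constructor
  · intro h
    set S : Finset (Fin s) := Finset.univ.filter (fun i => f i ∈ p) with hS
    have hcard : q + 1 ≤ S.card := by
      by_contra hc
      push_neg at hc
      have hSq : S.card ≤ q := Nat.lt_succ_iff.mp hc
      obtain ⟨J, hSJ, hJcard⟩ := Finset.exists_superset_card_eq hSq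
        (by simpa using hs.le)
      have hmem : ∏ j ∈ Jᶜ, f j ∈ p := h (Ideal.subset_span ⟨J, hJcard, rfl⟩)
      obtain ⟨j, hjJ, hjp⟩ := (Ideal.IsPrime.prod_mem_iff).mp hmem
      exact (Finset.mem_compl.mp hjJ) (hSJ (by simp [hS, hjp]))
    obtain ⟨K, hKS, hKcard⟩ := Finset.exists_subset_card_eq hcard
    exact ⟨K, hKcard, fun i hi => by
      have := hKS hi; simp [hS] at this; exact this⟩
  · rintro ⟨K, hKcard, hK⟩
    rw [Ideal.span_le]
    rintro _ ⟨J, hJ, rfl⟩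
    simp only [Set.mem_setOf_eq] at hJ
    have : ∃ i ∈ K, i ∉ J := by
      by_contra hc
      push_neg at hc
      have := Finset.card_le_card hc
      omega
    obtain ⟨i, hiK, hiJ⟩ := this
    exact Ideal.IsPrime.prod_mem_iff.mpr ⟨i, Finset.mem_compl.mpr hiJ, hK i hiK⟩
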